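/- Let {A_r} be an inductive system of local rings with local transition maps, I_r ⊆ A_r proper ideals compatible with the transition maps, and {M_r} a tower of modules (M_r a finite free A_r-module, with transition maps ρ_{r,s} : M_r → M_s ⊗_{A_s} A_r for r ≥ s) equipped with a compatible action of a procyclic group Δ_1 with descending subgroups Δ_r such that Δ_r acts trivially on M_r. Suppose: (a) M_r/I_r M_r is a free (A_r/I_r)[Δ_1/Δ_r]-module of rank d independent of r, and (b) the reduced transition maps are surjective. Then M_r is a free A_r[Δ_1/Δ_r]-module of rank d, and the induced maps M_r ⊗_{A_r[Δ_1/Δ_r]} A_r[Δ_1/Δ_s] → M_s ⊗_{A_s} A_r are isomorphisms for all r ≥ s. -/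

import Mathlib

open MonoidAlgebra

lemma auxNakayamaTop {R M : Type*} [CommRing R] [AddCommGroup M] [Module R M]
    [Module.Finite R M] {J : Ideal R} (hJ : J ≤ (⊥ : Ideal R).jacobson)
    {N : Submodule R M} (h : N ⊔ J • (⊤ : Submodule R M) = ⊤) : N = ⊤ := by
  have hmapN : Submodule.map N.mkQ N = ⊥ := by
    rw [eq_bot_iff, Submodule.map_le_iff_le_comap]
    intro x hx
    simpa [Submodule.mem_comap, Submodule.Quotient.mk_eq_zero] using hx
  have h3 := congrArg (Submodule.map N.mkQ) h
  rw [Submodule.map_sup, Submodule.map_smul'', Submodule.map_top, Submodule.range_mkQ,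
    hmapN, bot_sup_eq] at h3
  have h4 : (⊤ : Submodule R (M ⧸ N)) = ⊥ :=
    Submodule.eq_bot_of_le_smul_of_le_jacobson_bot J ⊤
      (Module.finite_def.mp inferInstance) (le_of_eq h3.symm) hJ
  have h5 : Subsingleton (M ⧸ N) := by
    constructor
    intro a b
    have ha : a ∈ (⊥ : Submodule R (M ⧸ N)) := h4 ▸ Submodule.mem_top
    have hb : b ∈ (⊥ : Submodule R (M ⧸ N)) := h4 ▸ Submodule.mem_top
    rw [Submodule.mem_bot] at ha hb
    rw [ha, hb]
  exact (Submodule.Quotient.subsingleton_iff (p := N)).mp h5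

lemma auxSmulMem {A R V : Type*} [CommRing A] [CommRing R] [Algebra A R]
    [AddCommGroup V] [Module A V] [Module R V] [IsScalarTower A R V]
    {I : Ideal A} {c : R} (hc : c ∈ I.map (algebraMap A R)) (v : V) :
    c • v ∈ I • (⊤ : Submodule A V) := by
  have hc' : c ∈ Submodule.span R ((algebraMap A R) '' I) := hc
  refine Submodule.span_induction (p := fun x _ => ∀ w : V, x • w ∈ I • (⊤ : Submodule A V))
    ?_ ?_ ?_ ?_ hc' v
  · rintro x ⟨a, ha, rfl⟩ w
    rw [algebraMap_smul]
    exact Submodule.smul_mem_smul ha trivial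
  · intro w; rw [zero_smul]; exact Submodule.zero_mem _
  · intro x y hx hy ihx ihy w; rw [add_smul]; exact Submodule.add_mem _ (ihx w) (ihy w)
  · intro a x hx ihx w
    rw [smul_eq_mul, mul_comm, mul_smul]
    exact ihx (a • w)

lemma auxFree {A R M : Type*} [CommRing A] [IsLocalRing A] [CommRing R] [Algebra A R]
    [AddCommGroup M] [Module A M] [Module R M] [IsScalarTower A R M]
    [Module.Finite A M] [Module.Free A M] [Module.Finite A R]
    {I : Ideal A} (hI : I ≠ ⊤)
    (hJ : I.map (algebraMap A R) ≤ (⊥ : Ideal R).jacobson)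
    {d : ℕ}
    (bb : Module.Basis (Fin d) (R ⧸ I.map (algebraMap A R))
      (M ⧸ (I.map (algebraMap A R) • (⊤ : Submodule R M)))) :
    Nonempty (Module.Basis (Fin d) R M) := by
  classical
  set J : Ideal R := I.map (algebraMap A R) with hJdef
  haveI : Module.Finite R M := Module.Finite.of_restrictScalars_finite A R M
  choose m hm using fun i => Submodule.Quotient.mk_surjective (J • (⊤ : Submodule R M)) (bb i)
  set φ : (Fin d →₀ R) →ₗ[R] M := Finsupp.linearCombination R m with hφdef
  have hspan : Submodule.span R (Set.range m) = ⊤ := by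
    refine auxNakayamaTop hJ ?_
    rw [eq_top_iff]
    rintro x -
    choose c hc using fun i => Ideal.Quotient.mk_surjective
      (I := J) (bb.repr (Submodule.Quotient.mk x) i)
    set y : M := ∑ i, c i • m i with hy
    have h1 : (Submodule.Quotient.mk y : M ⧸ (J • (⊤ : Submodule R M)))
        = ∑ i, bb.repr (Submodule.Quotient.mk x) i • bb i := by
      rw [hy, ← Submodule.mkQ_apply, map_sum]
      refine Finset.sum_congr rfl fun i _ => ?_
      rw [Submodule.mkQ_apply, ← hm i, ← hc i, Module.Quotient.mk_smul_mk]
    have h2 : (Submodule.Quotient.mk x : M ⧸ (J • (⊤ : Submodule R M)))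
        = ∑ i, bb.repr (Submodule.Quotient.mk x) i • bb i := (bb.sum_repr _).symm
    have hxy : x - y ∈ J • (⊤ : Submodule R M) := by
      rw [← Submodule.Quotient.mk_eq_zero, Submodule.Quotient.mk_sub, h1, ← h2, sub_self]
    have hyspan : y ∈ Submodule.span R (Set.range m) :=
      Submodule.sum_mem _ fun i _ =>
        Submodule.smul_mem _ _ (Submodule.subset_span ⟨i, rfl⟩)
    have hx : x = y + (x - y) := by abel
    rw [hx]
    exact Submodule.add_mem_sup hyspan hxy
  have hsurj : Function.Surjective φ := by
    rw [← LinearMap.range_eq_top, hφdef, Finsupp.range_linearCombination, hspan]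
  set φA : (Fin d →₀ R) →ₗ[A] M := φ.restrictScalars A with hφA
  have hsurjA : Function.Surjective φA := hsurj
  obtain ⟨σ, hσ⟩ := Module.projective_lifting_property φA LinearMap.id hsurjA
  set π : (Fin d →₀ R) →ₗ[A] (Fin d →₀ R) := LinearMap.id - σ ∘ₗ φA with hπ
  have hφπ : ∀ x, φA (π x) = 0 := by
    intro x
    have h5 := LinearMap.congr_fun hσ (φA x)
    simp only [hπ, LinearMap.sub_apply, LinearMap.id_apply, LinearMap.comp_apply, map_sub] at *
    rw [h5, sub_self]
  have hfix : ∀ x, φA x = 0 → π x = x := by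
    intro x hx
    simp [hπ, hx]
  have hrange : LinearMap.range π = LinearMap.ker φA := by
    apply le_antisymm
    · rintro _ ⟨x, rfl⟩; exact LinearMap.mem_ker.mpr (hφπ x)
    · intro x hx; exact ⟨x, hfix x (LinearMap.mem_ker.mp hx)⟩
  have hcomp : ∀ x ∈ LinearMap.ker φA, x ∈ I • (⊤ : Submodule A (Fin d →₀ R)) := by
    intro x hx
    have hxi : ∀ i, x i ∈ J := by
      intro i
      have hphix : φ x = 0 := hx
      have hsum : φ x = ∑ k, x k • m k := by
        rw [hφdef, Finsupp.linearCombination_apply, Finsupp.sum_fintype]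
        intro k; exact zero_smul _ _
      have h0 : (0 : M ⧸ (J • (⊤ : Submodule R M)))
          = ∑ k, Ideal.Quotient.mk J (x k) • bb k := by
        have : (Submodule.Quotient.mk (φ x) : M ⧸ (J • (⊤ : Submodule R M)))
            = ∑ k, Ideal.Quotient.mk J (x k) • bb k := by
          rw [hsum, ← Submodule.mkQ_apply, map_sum]
          refine Finset.sum_congr rfl fun k _ => ?_
          rw [Submodule.mkQ_apply, ← hm k, Module.Quotient.mk_smul_mk]
        rw [← this, hphix, Submodule.Quotient.mk_zero]
      have h6 := congrFun (bb.repr_sum_self fun k => Ideal.Quotient.mk J (x k)) i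
      rw [← h0, map_zero] at h6
      have : Ideal.Quotient.mk J (x i) = 0 := by
        simpa using h6.symm
      exact (Ideal.Quotient.eq_zero_iff_mem).mp this
    have hxdecomp : (∑ i, Finsupp.single i (x i)) = x := by
      conv_rhs => rw [← Finsupp.sum_single x]
      exact (Finsupp.sum_fintype _ _ fun k => Finsupp.single_zero k).symm
    rw [← hxdecomp]
    refine Submodule.sum_mem _ fun i _ => ?_
    have hsing : Finsupp.single i (x i) = (x i) • Finsupp.single i (1 : R) := by
      rw [Finsupp.smul_single, smul_eq_mul, mul_one]
    rw [hsing]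
    exact auxSmulMem (hxi i) _
  have hKfg : (LinearMap.ker φA).FG := by
    rw [← hrange, ← Submodule.map_top]
    exact Submodule.FG.map _ (Module.finite_def.mp inferInstance)
  have hKle : LinearMap.ker φA ≤ I • LinearMap.ker φA := by
    intro x hx
    have h1 : x ∈ Submodule.map π (I • (⊤ : Submodule A (Fin d →₀ R))) :=
      ⟨x, hcomp x hx, hfix x hx⟩
    rw [Submodule.map_smul'', Submodule.map_top, hrange] at h1
    exact h1
  have hAjac : I ≤ (⊥ : Ideal A).jacobson := by
    rw [IsLocalRing.jacobson_eq_maximalIdeal ⊥ bot_ne_top]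
    exact IsLocalRing.le_maximalIdeal hI
  have hKbot : LinearMap.ker φA = ⊥ :=
    Submodule.eq_bot_of_le_smul_of_le_jacobson_bot I _ hKfg hKle hAjac
  have hinjA : Function.Injective φA := LinearMap.ker_eq_bot.mp hKbot
  have hinj : Function.Injective φ := hinjA
  exact ⟨Finsupp.basisSingleOne.map (LinearEquiv.ofBijective φ ⟨hinj, hsurj⟩)⟩

/-- Lemma `Technical` (1),(2): the tower formalism.  `{A r}` is an inductive system of
local rings with local transition maps `t`, with compatible proper ideals `I r`;
`Δ₁ = G` is a (pro)cyclic group with descending subgroups `Δ_r = N r` acting on a tower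
of modules `M r`, each finite free over `A r`, with `N r` acting trivially on `M r`
(encoded by letting `M r` be a module over the group ring `A r[G ⧸ N r]`).  The
transition maps are `ρ : M r → M s ⊗_{A s} A r` for `s ≤ r`; here the base change
`M s ⊗_{A s} A r` is encoded as an abstract module `P s r` equipped with a
`t`-semilinear map `j : M s → P s r` carrying bases to bases.  Assuming
(a) `M r / I_r M r` is free of rank `d` over `(A r / I r)[G ⧸ N r]` and
(b) the reduced transition maps are surjective, the conclusion is that `M r` is free
of rank `d` over `A r[G ⧸ N r]`, and the induced maps
`M r ⊗_{A r[G⧸N r]} A r[G⧸N s] → M s ⊗_{A s} A r` are isomorphisms, i.e. `ρ` is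
surjective with kernel spanned by the elements `g•m − m`, `g ∈ N s`. -/
theorem stmt_12
    (G : Type) [CommGroup G] (N : ℕ → Subgroup G) (hN : ∀ s r : ℕ, s ≤ r → N r ≤ N s)
    [∀ r, Finite (G ⧸ N r)]
    (A : ℕ → Type) [∀ r, CommRing (A r)] [∀ r, IsLocalRing (A r)]
    [∀ r, IsLocalRing (MonoidAlgebra (A r) (G ⧸ N r))]
    (t : ∀ s r : ℕ, s ≤ r → (A s →+* A r))
    (ht : ∀ (s r : ℕ) (h : s ≤ r), IsLocalHom (t s r h))
    (htcomp : ∀ (s r u : ℕ) (h₁ : s ≤ r) (h₂ : r ≤ u),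
      (t r u h₂).comp (t s r h₁) = t s u (h₁.trans h₂))
    (I : ∀ r, Ideal (A r)) (hI : ∀ r, I r ≠ ⊤)
    (hIcomp : ∀ (s r : ℕ) (h : s ≤ r), (I s).map (t s r h) ≤ I r)
    (M : ℕ → Type) [∀ r, AddCommGroup (M r)] [∀ r, Module (A r) (M r)]
    [∀ r, Module (MonoidAlgebra (A r) (G ⧸ N r)) (M r)]
    [∀ r, IsScalarTower (A r) (MonoidAlgebra (A r) (G ⧸ N r)) (M r)]
    [∀ r, Module.Finite (A r) (M r)] [∀ r, Module.Free (A r) (M r)]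
    -- the base-change modules `P s r = M s ⊗_{A s} A r`
    (P : ∀ s r : ℕ, s ≤ r → Type)
    [∀ (s r : ℕ) (h : s ≤ r), AddCommGroup (P s r h)]
    [∀ (s r : ℕ) (h : s ≤ r), Module (A r) (P s r h)]
    [∀ (s r : ℕ) (h : s ≤ r), Module (MonoidAlgebra (A r) (G ⧸ N s)) (P s r h)]
    [∀ (s r : ℕ) (h : s ≤ r), IsScalarTower (A r) (MonoidAlgebra (A r) (G ⧸ N s)) (P s r h)]
    (j : ∀ (s r : ℕ) (h : s ≤ r), M s →+ P s r h)
    (hjsemi : ∀ (s r : ℕ) (h : s ≤ r) (a : A s) (m : M s),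
      j s r h (a • m) = t s r h a • j s r h m)
    (hjbc : ∀ (s r : ℕ) (h : s ≤ r) (n : ℕ) (b : Module.Basis (Fin n) (A s) (M s)),
      ∃ b' : Module.Basis (Fin n) (A r) (P s r h), ∀ i, b' i = j s r h (b i))
    (hjG : ∀ (s r : ℕ) (h : s ≤ r) (g : G) (m : M s),
      j s r h ((single (QuotientGroup.mk g : G ⧸ N s) (1 : A s)) • m) =
        (single (QuotientGroup.mk g : G ⧸ N s) (1 : A r)) • j s r h m)
    -- the transition maps `ρ`
    (ρ : ∀ (s r : ℕ) (h : s ≤ r), M r →ₗ[A r] P s r h)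
    (hρG : ∀ (s r : ℕ) (h : s ≤ r) (g : G) (m : M r),
      ρ s r h ((single (QuotientGroup.mk g : G ⧸ N r) (1 : A r)) • m) =
        (single (QuotientGroup.mk g : G ⧸ N s) (1 : A r)) • ρ s r h m)
    (d : ℕ)
    -- hypothesis (a): freeness of rank `d` modulo `I r`
    (ha : ∀ r, Nonempty (Module.Basis (Fin d)
      ((MonoidAlgebra (A r) (G ⧸ N r)) ⧸
        ((I r).map (algebraMap (A r) (MonoidAlgebra (A r) (G ⧸ N r)))))
      ((M r) ⧸ (((I r).map (algebraMap (A r) (MonoidAlgebra (A r) (G ⧸ N r)))) •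
        (⊤ : Submodule (MonoidAlgebra (A r) (G ⧸ N r)) (M r))))))
    -- hypothesis (b): surjectivity of the reduced transition maps
    (hb : ∀ (s r : ℕ) (h : s ≤ r), Function.Surjective
      (fun m : M r => (Submodule.Quotient.mk (ρ s r h m) :
        (P s r h) ⧸ ((I r) • (⊤ : Submodule (A r) (P s r h)))))) :
    (∀ r, Nonempty (Module.Basis (Fin d) (MonoidAlgebra (A r) (G ⧸ N r)) (M r))) ∧
    (∀ (s r : ℕ) (h : s ≤ r),
      Function.Surjective (ρ s r h) ∧
      LinearMap.ker (ρ s r h) = Submodule.span (A r)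
        {x : M r | ∃ g ∈ N s, ∃ m : M r,
          x = (single (QuotientGroup.mk g : G ⧸ N r) (1 : A r)) • m - m}) := by
  classical
  -- finiteness of the group rings
  haveI hRfin : ∀ r, Module.Finite (A r) (MonoidAlgebra (A r) (G ⧸ N r)) := by
    intro r
    haveI : Fintype (G ⧸ N r) := Fintype.ofFinite _
    exact Module.Finite.of_basis
      (MonoidAlgebra.basis _ _ :
        Module.Basis (G ⧸ N r) (A r) (MonoidAlgebra (A r) (G ⧸ N r)))
  -- jacobson radical bound
  have hjac : ∀ r, (I r).map (algebraMap (A r) (MonoidAlgebra (A r) (G ⧸ N r)))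
      ≤ (⊥ : Ideal (MonoidAlgebra (A r) (G ⧸ N r))).jacobson := by
    intro r
    rw [IsLocalRing.jacobson_eq_maximalIdeal ⊥ bot_ne_top, Ideal.map_le_iff_le_comap]
    intro a haI
    rw [Ideal.mem_comap, IsLocalRing.mem_maximalIdeal, mem_nonunits_iff]
    intro hu
    have hu2 := hu.map (MonoidAlgebra.lift (A r) (A r) (G ⧸ N r) 1)
    rw [AlgHom.commutes] at hu2
    simp only [Algebra.algebraMap_self, RingHom.id_apply] at hu2
    exact hI r (Ideal.eq_top_of_isUnit_mem _ haI hu2)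
  have hfree : ∀ r, Nonempty (Module.Basis (Fin d) (MonoidAlgebra (A r) (G ⧸ N r)) (M r)) :=
    fun r => auxFree (hI r) (hjac r) (ha r).some
  have hjacA : ∀ r, I r ≤ (⊥ : Ideal (A r)).jacobson := by
    intro r
    rw [IsLocalRing.jacobson_eq_maximalIdeal ⊥ bot_ne_top]
    exact IsLocalRing.le_maximalIdeal (hI r)
  refine ⟨hfree, fun s r h => ?_⟩
  haveI : Fintype (G ⧸ N s) := Fintype.ofFinite _
  haveI : Fintype (G ⧸ N r) := Fintype.ofFinite _
  obtain ⟨e⟩ := hfree r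
  obtain ⟨c⟩ := hfree s
  -- a basis of `P s r h` over `A r`
  set us : Module.Basis (G ⧸ N s) (A s) (MonoidAlgebra (A s) (G ⧸ N s)) :=
    MonoidAlgebra.basis _ _ with hus
  set bMs : Module.Basis ((G ⧸ N s) × Fin d) (A s) (M s) := us.smulTower c with hbMs
  set eqv : ((G ⧸ N s) × Fin d) ≃ Fin (Fintype.card ((G ⧸ N s) × Fin d)) :=
    Fintype.equivFin _ with heqv
  obtain ⟨b', hb'⟩ := hjbc s r h _ (bMs.reindex eqv)
  set γ : Module.Basis ((G ⧸ N s) × Fin d) (A r) (P s r h) := b'.reindex eqv.symm with hγ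
  haveI : Module.Finite (A r) (P s r h) := Module.Finite.of_basis γ
  -- surjectivity of ρ
  have hsurjρ : Function.Surjective (ρ s r h) := by
    have h1 : LinearMap.range (ρ s r h) ⊔ (I r) • (⊤ : Submodule (A r) (P s r h)) = ⊤ := by
      rw [eq_top_iff]
      rintro y -
      obtain ⟨m1, hm1⟩ := hb s r h (Submodule.Quotient.mk y)
      have h2 : ρ s r h m1 - y ∈ (I r) • (⊤ : Submodule (A r) (P s r h)) :=
        (Submodule.Quotient.eq _).mp hm1
      have hy : y = ρ s r h m1 + -(ρ s r h m1 - y) := by abel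
      rw [hy]
      exact Submodule.add_mem_sup (LinearMap.mem_range_self _ m1)
        (Submodule.neg_mem _ h2)
    have h2 := auxNakayamaTop (hjacA r) h1
    rwa [← LinearMap.range_eq_top]
  -- the kernel
  set S : Set (M r) := {x : M r | ∃ g ∈ N s, ∃ m : M r,
      x = (single (QuotientGroup.mk g : G ⧸ N r) (1 : A r)) • m - m} with hS
  set K : Submodule (A r) (M r) := Submodule.span (A r) S with hKdef
  have hKker : K ≤ LinearMap.ker (ρ s r h) := by
    rw [hKdef, Submodule.span_le]
    rintro x ⟨g, hg, m1, rfl⟩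
    rw [SetLike.mem_coe, LinearMap.mem_ker, map_sub, hρG]
    have hone : (QuotientGroup.mk g : G ⧸ N s) = 1 := (QuotientGroup.eq_one_iff g).mpr hg
    rw [hone, ← MonoidAlgebra.one_def, one_smul, sub_self]
  set ρ' : ((M r) ⧸ K) →ₗ[A r] P s r h := K.liftQ (ρ s r h) hKker with hρ'
  have hρ'mk : ∀ m1 : M r, ρ' (Submodule.Quotient.mk m1) = ρ s r h m1 :=
    fun m1 => Submodule.liftQ_apply K _ m1
  have hρ'surj : Function.Surjective ρ' := by
    intro y
    obtain ⟨m1, hm1⟩ := hsurjρ y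
    exact ⟨Submodule.Quotient.mk m1, by rw [hρ'mk, hm1]⟩
  -- generators of M r ⧸ K
  set gen : ((G ⧸ N s) × Fin d) → ((M r) ⧸ K) := fun p =>
    Submodule.Quotient.mk
      ((single (QuotientGroup.mk (Quotient.out (p.1)) : G ⧸ N r) (1 : A r)) • e p.2)
    with hgen
  have hdiff : ∀ (g g' : G), g * g'⁻¹ ∈ N s → ∀ m1 : M r,
      (Submodule.Quotient.mk ((single (QuotientGroup.mk g : G ⧸ N r) (1 : A r)) • m1) :
        (M r) ⧸ K)
      = Submodule.Quotient.mk ((single (QuotientGroup.mk g' : G ⧸ N r) (1 : A r)) • m1) := by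
    intro g g' hgg m1
    rw [Submodule.Quotient.eq]
    have hrw : (single (QuotientGroup.mk g : G ⧸ N r) (1 : A r)) • m1
        - (single (QuotientGroup.mk g' : G ⧸ N r) (1 : A r)) • m1
        = (single (QuotientGroup.mk (g * g'⁻¹) : G ⧸ N r) (1 : A r)) •
            ((single (QuotientGroup.mk g' : G ⧸ N r) (1 : A r)) • m1)
          - (single (QuotientGroup.mk g' : G ⧸ N r) (1 : A r)) • m1 := by
      rw [smul_smul, MonoidAlgebra.single_mul_single, one_mul, ← QuotientGroup.mk_mul,
        inv_mul_cancel_right]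
    rw [hrw]
    exact Submodule.subset_span ⟨g * g'⁻¹, hgg, _, rfl⟩
  have hgenspan : Submodule.span (A r) (Set.range gen) = ⊤ := by
    set ur : Module.Basis (G ⧸ N r) (A r) (MonoidAlgebra (A r) (G ⧸ N r)) :=
      MonoidAlgebra.basis _ _ with hur
    set bMr : Module.Basis ((G ⧸ N r) × Fin d) (A r) (M r) := ur.smulTower e with hbMr
    rw [eq_top_iff]
    have h1 : (⊤ : Submodule (A r) ((M r) ⧸ K)) = Submodule.map K.mkQ ⊤ := by
      rw [Submodule.map_top, Submodule.range_mkQ]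
    rw [h1, ← bMr.span_eq, Submodule.map_span]
    refine Submodule.span_le.mpr ?_
    rintro _ ⟨_, ⟨⟨q, i⟩, rfl⟩, rfl⟩
    obtain ⟨g, rfl⟩ := QuotientGroup.mk_surjective q
    have hbval : bMr (QuotientGroup.mk g, i)
        = (single (QuotientGroup.mk g : G ⧸ N r) (1 : A r)) • e i := by
      rw [hbMr, Module.Basis.smulTower_apply]
      congr 1
    have hmem : g * (Quotient.out (QuotientGroup.mk g : G ⧸ N s))⁻¹ ∈ N s := by
      rw [← QuotientGroup.eq_one_iff, QuotientGroup.mk_mul, QuotientGroup.mk_inv,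
        QuotientGroup.out_eq', mul_inv_cancel]
    have h2 := hdiff g (Quotient.out (QuotientGroup.mk g : G ⧸ N s)) hmem (e i)
    rw [Submodule.mkQ_apply, hbval, h2]
    exact Submodule.subset_span ⟨(QuotientGroup.mk g, i), rfl⟩
  set Φ : (((G ⧸ N s) × Fin d) →₀ A r) →ₗ[A r] ((M r) ⧸ K) :=
    Finsupp.linearCombination (A r) gen with hΦ
  have hΦsurj : Function.Surjective Φ := by
    rw [← LinearMap.range_eq_top, hΦ, Finsupp.range_linearCombination, hgenspan]
  set E : (((G ⧸ N s) × Fin d) →₀ A r) →ₗ[A r] (((G ⧸ N s) × Fin d) →₀ A r) :=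
    (γ.repr.toLinearMap ∘ₗ ρ') ∘ₗ Φ with hE
  have hEsurj : Function.Surjective E := by
    intro z
    obtain ⟨p, hp⟩ := hρ'surj (γ.repr.symm z)
    obtain ⟨u, hu⟩ := hΦsurj p
    refine ⟨u, ?_⟩
    rw [hE]
    simp only [LinearMap.comp_apply, LinearEquiv.coe_toLinearMap]
    rw [hu, hp, LinearEquiv.apply_symm_apply]
  have hEinj : Function.Injective E :=
    OrzechProperty.injective_of_surjective_endomorphism E hEsurj
  have hρ'inj : Function.Injective ρ' := by
    intro x y hxy
    obtain ⟨u, rfl⟩ := hΦsurj x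
    obtain ⟨v, rfl⟩ := hΦsurj y
    have hEuv : E u = E v := by
      rw [hE]
      simp only [LinearMap.comp_apply, LinearEquiv.coe_toLinearMap]
      rw [hxy]
    rw [hEinj hEuv]
  refine ⟨hsurjρ, ?_⟩
  apply le_antisymm
  · intro x hx
    have h0 : ρ' (Submodule.Quotient.mk x) = ρ' 0 := by
      rw [map_zero, hρ'mk]
      exact LinearMap.mem_ker.mp hx
    have h1 := hρ'inj h0
    rwa [Submodule.Quotient.mk_eq_zero] at h1
  · exact hKker
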